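/- arXiv:1708.01907 — 5 statements merged into one kernel-verified Lean document; each statement's English description precedes it below -/
import Mathlib

section
/- Let A be a real b×a matrix and B a real b×c matrix with Aᵀ·B = 0, and let Δ = A·Aᵀ + B·Bᵀ : ℝ^b → ℝ^b. Then ℝ^b decomposes as the internal direct sum ℝ^b = ker Δ ⊕ range A ⊕ range B, and the three subspaces ker Δ, range A, and range B are pairwise orthogonal with respect to the standard inner product on ℝ^b. -/
open Matrix

lemma inner_eq_dot {b : ℕ} (x y : EuclideanSpace ℝ (Fin b)) :
    (inner ℝ x y : ℝ) = (x : Fin b → ℝ) ⬝ᵥ (y : Fin b → ℝ) := by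
  simp [PiLp.inner_apply, RCLike.inner_apply, dotProduct, mul_comm]

lemma ker_char {a b c : ℕ} (A : Matrix (Fin b) (Fin a) ℝ) (B : Matrix (Fin b) (Fin c) ℝ)
    (x : Fin b → ℝ) :
    (A * Aᵀ + B * Bᵀ) *ᵥ x = 0 ↔ Aᵀ *ᵥ x = 0 ∧ Bᵀ *ᵥ x = 0 := by
  constructor
  · intro h
    have e : (Aᵀ *ᵥ x) ⬝ᵥ (Aᵀ *ᵥ x) + (Bᵀ *ᵥ x) ⬝ᵥ (Bᵀ *ᵥ x) = 0 := by
      have h2 := congrArg (fun v => x ⬝ᵥ v) h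
      simpa [add_mulVec, ← mulVec_mulVec, dotProduct_mulVec, mulVec_transpose] using h2
    have h1 : (0:ℝ) ≤ (Aᵀ *ᵥ x) ⬝ᵥ (Aᵀ *ᵥ x) := Finset.sum_nonneg fun i _ => mul_self_nonneg _
    have h2 : (0:ℝ) ≤ (Bᵀ *ᵥ x) ⬝ᵥ (Bᵀ *ᵥ x) := Finset.sum_nonneg fun i _ => mul_self_nonneg _
    constructor
    · exact dotProduct_self_eq_zero.mp (by linarith)
    · exact dotProduct_self_eq_zero.mp (by linarith)
  · rintro ⟨h1, h2⟩
    simp [add_mulVec, ← mulVec_mulVec, h1, h2]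

/-- For real matrices `A : b × a` and `B : b × c` with `Aᵀ · B = 0`
and `Δ = A·Aᵀ + B·Bᵀ`, the space `ℝ^b` is the internal direct sum
`ker Δ ⊕ range A ⊕ range B`, and the three subspaces are pairwise orthogonal
with respect to the standard inner product (dot product). -/
theorem hodge_decomposition (a b c : ℕ)
    (A : Matrix (Fin b) (Fin a) ℝ) (B : Matrix (Fin b) (Fin c) ℝ)
    (hAB : Aᵀ * B = 0) :
    DirectSum.IsInternal
      (![LinearMap.ker (A * Aᵀ + B * Bᵀ).mulVecLin,
         LinearMap.range A.mulVecLin,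
         LinearMap.range B.mulVecLin] : Fin 3 → Submodule ℝ (Fin b → ℝ)) ∧
    (∀ x ∈ LinearMap.ker (A * Aᵀ + B * Bᵀ).mulVecLin,
      ∀ y ∈ LinearMap.range A.mulVecLin, x ⬝ᵥ y = 0) ∧
    (∀ x ∈ LinearMap.ker (A * Aᵀ + B * Bᵀ).mulVecLin,
      ∀ y ∈ LinearMap.range B.mulVecLin, x ⬝ᵥ y = 0) ∧
    (∀ x ∈ LinearMap.range A.mulVecLin,
      ∀ y ∈ LinearMap.range B.mulVecLin, x ⬝ᵥ y = 0) := by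
  -- pairwise orthogonality in terms of dot products
  have hKA : ∀ x ∈ LinearMap.ker (A * Aᵀ + B * Bᵀ).mulVecLin,
      ∀ y ∈ LinearMap.range A.mulVecLin, x ⬝ᵥ y = 0 := by
    rintro x hx y ⟨u, rfl⟩
    have hx' : Aᵀ *ᵥ x = 0 := ((ker_char A B x).mp hx).1
    simp [mulVecLin_apply, dotProduct_mulVec, ← mulVec_transpose, hx']
  have hKB : ∀ x ∈ LinearMap.ker (A * Aᵀ + B * Bᵀ).mulVecLin,
      ∀ y ∈ LinearMap.range B.mulVecLin, x ⬝ᵥ y = 0 := by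
    rintro x hx y ⟨u, rfl⟩
    have hx' : Bᵀ *ᵥ x = 0 := ((ker_char A B x).mp hx).2
    simp [mulVecLin_apply, dotProduct_mulVec, ← mulVec_transpose, hx']
  have hAB' : ∀ x ∈ LinearMap.range A.mulVecLin,
      ∀ y ∈ LinearMap.range B.mulVecLin, x ⬝ᵥ y = 0 := by
    rintro _ ⟨u, rfl⟩ _ ⟨v, rfl⟩
    simp only [mulVecLin_apply, dotProduct_mulVec]
    have hBA : Bᵀ * A = 0 := by
      have := congrArg Matrix.transpose hAB
      simpa [Matrix.transpose_mul] using this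
    rw [← mulVec_transpose, mulVec_mulVec, hBA, zero_mulVec, zero_dotProduct]
  refine ⟨?_, hKA, hKB, hAB'⟩
  -- the direct sum part, via EuclideanSpace
  set V : Fin 3 → Submodule ℝ (Fin b → ℝ) :=
    ![LinearMap.ker (A * Aᵀ + B * Bᵀ).mulVecLin,
      LinearMap.range A.mulVecLin,
      LinearMap.range B.mulVecLin] with hV
  have horth : ∀ i j, i ≠ j → ∀ x ∈ V i, ∀ y ∈ V j, x ⬝ᵥ y = 0 := by
    have hsymm : ∀ (x y : Fin b → ℝ), x ⬝ᵥ y = 0 → y ⬝ᵥ x = 0 := by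
      intro x y h; rwa [dotProduct_comm]
    intro i j hij
    fin_cases i <;> fin_cases j <;>
      simp only [hV, Fin.isValue, Matrix.cons_val_zero, Matrix.cons_val_one,
        Matrix.head_cons, Matrix.cons_val_two, Matrix.tail_cons] <;>
      first
      | exact absurd rfl hij
      | exact fun x hx y hy => hKA x hx y hy
      | exact fun x hx y hy => hKB x hx y hy
      | exact fun x hx y hy => hAB' x hx y hy
      | exact fun x hx y hy => hsymm _ _ (hKA y hy x hx)
      | exact fun x hx y hy => hsymm _ _ (hKB y hy x hx)
      | exact fun x hx y hy => hsymm _ _ (hAB' y hy x hx)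
  -- move to EuclideanSpace
  let e : EuclideanSpace ℝ (Fin b) ≃ₗ[ℝ] (Fin b → ℝ) := WithLp.linearEquiv 2 ℝ (Fin b → ℝ)
  let W : Fin 3 → Submodule ℝ (EuclideanSpace ℝ (Fin b)) :=
    fun i => (Submodule.orderIsoMapComap e).symm (V i)
  have hOF : OrthogonalFamily ℝ (fun i => (W i : Type _)) (fun i => (W i).subtypeₗᵢ) := by
    intro i j hij u w
    rw [inner_eq_dot]
    exact horth i j hij u u.2 w w.2
  suffices h : DirectSum.IsInternal W by
    rw [DirectSum.isInternal_submodule_iff_iSupIndep_and_iSup_eq_top] at h ⊢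
    obtain ⟨h1, h2⟩ := h
    have h3 : ∀ i, Submodule.orderIsoMapComap e (W i) = V i :=
      fun i => OrderIso.apply_symm_apply _ _
    refine ⟨?_, ?_⟩
    · have := h1.map_orderIso (Submodule.orderIsoMapComap e)
      rw [show ⇑(Submodule.orderIsoMapComap e) ∘ W = V from funext h3] at this
      exact this
    · have := congrArg (Submodule.orderIsoMapComap e) h2
      rw [OrderIso.map_iSup, OrderIso.map_top] at this
      simp only [OrderIso.apply_symm_apply] at this
      exact this
  rw [hOF.isInternal_iff]
  rw [Submodule.eq_bot_iff]
  intro x hx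
  rw [Submodule.mem_orthogonal] at hx
  have hxA : Aᵀ *ᵥ x = 0 := by
    rw [← dotProduct_self_eq_zero (v := Aᵀ *ᵥ x)]
    have := hx (WithLp.toLp 2 (A *ᵥ (Aᵀ *ᵥ x))) (Submodule.mem_iSup_of_mem 1 ⟨Aᵀ *ᵥ x, rfl⟩)
    rw [inner_eq_dot, WithLp.ofLp_toLp] at this
    rw [← this]
    rw [dotProduct_comm, dotProduct_mulVec, ← mulVec_transpose, transpose_transpose]
  have hxB : Bᵀ *ᵥ x = 0 := by
    rw [← dotProduct_self_eq_zero (v := Bᵀ *ᵥ x)]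
    have := hx (WithLp.toLp 2 (B *ᵥ (Bᵀ *ᵥ x))) (Submodule.mem_iSup_of_mem 2 ⟨Bᵀ *ᵥ x, rfl⟩)
    rw [inner_eq_dot, WithLp.ofLp_toLp] at this
    rw [← this]
    rw [dotProduct_comm, dotProduct_mulVec, ← mulVec_transpose, transpose_transpose]
  have hxK : (x : Fin b → ℝ) ∈ V 0 := by
    show (A * Aᵀ + B * Bᵀ).mulVecLin x = 0
    exact (ker_char A B x).mpr ⟨hxA, hxB⟩
  have := hx x (Submodule.mem_iSup_of_mem 0 hxK)
  rw [inner_eq_dot] at this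
  exact congrArg (WithLp.toLp 2) (dotProduct_self_eq_zero.mp this)
end

section
/- Let A be a real b×a matrix and B a real b×c matrix with Aᵀ·B = 0, and let Δ = A·Aᵀ + B·Bᵀ : ℝ^b → ℝ^b. Then the cycle space decomposes as the internal direct sum ker Aᵀ = ker Δ ⊕ range B, and the subspaces ker Δ and range B are orthogonal with respect to the standard inner product on ℝ^b. -/
open Matrix

private lemma decomp_aux {b c : ℕ} (B : Matrix (Fin b) (Fin c) ℝ) (x : Fin b → ℝ) :
    ∃ v : Fin c → ℝ, Bᵀ *ᵥ (x - B *ᵥ v) = 0 := by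
  let E := EuclideanSpace ℝ (Fin b)
  let K : Submodule ℝ E := LinearMap.range
    ((WithLp.linearEquiv 2 ℝ (Fin b → ℝ)).symm.toLinearMap ∘ₗ B.mulVecLin)
  obtain ⟨y, hy, z, hz, hxyz⟩ := K.exists_add_mem_mem_orthogonal (WithLp.toLp 2 x : E)
  obtain ⟨v, hv⟩ := hy
  refine ⟨v, ?_⟩
  have hzx : (x - B *ᵥ v : Fin b → ℝ) = z.ofLp := by
    have h1 : (WithLp.toLp 2 x : E) = y + z := hxyz
    rw [← hv] at h1
    funext i
    have h2 : x i = (B *ᵥ v) i + z i := congrArg (fun w : E => w i) h1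
    show x i - (B *ᵥ v) i = z i
    rw [h2]; ring
  rw [hzx]
  funext j
  have hperp : inner ℝ (WithLp.toLp 2 (B *ᵥ Pi.single j 1) : E) z = 0 :=
    (Submodule.mem_orthogonal K z).mp hz _ ⟨Pi.single j 1, rfl⟩
  rw [PiLp.inner_apply] at hperp
  simp only [Matrix.mulVec_single, mul_one, RCLike.inner_apply,
    starRingEnd_apply, star_trivial] at hperp
  show (Bᵀ *ᵥ z.ofLp) j = 0
  rw [← hperp]
  simp [Matrix.mulVec, dotProduct, Matrix.transpose_apply, mul_comm]

private lemma quad_aux {a b : ℕ} (M : Matrix (Fin b) (Fin a) ℝ) (x : Fin b → ℝ) :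
    x ⬝ᵥ ((M * Mᵀ) *ᵥ x) = (Mᵀ *ᵥ x) ⬝ᵥ (Mᵀ *ᵥ x) := by
  rw [← Matrix.mulVec_mulVec, Matrix.dotProduct_mulVec]
  congr 1
  rw [← Matrix.transpose_transpose M, Matrix.vecMul_transpose, Matrix.transpose_transpose]

private lemma dot_self_nonneg {n : ℕ} (v : Fin n → ℝ) : 0 ≤ v ⬝ᵥ v :=
  Finset.sum_nonneg fun i _ => mul_self_nonneg _

/-- If `Δ x = 0` then `Aᵀ x = 0` and `Bᵀ x = 0`. -/
private lemma ker_delta {a b c : ℕ} (A : Matrix (Fin b) (Fin a) ℝ)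
    (B : Matrix (Fin b) (Fin c) ℝ) (x : Fin b → ℝ)
    (h : (A * Aᵀ + B * Bᵀ) *ᵥ x = 0) : Aᵀ *ᵥ x = 0 ∧ Bᵀ *ᵥ x = 0 := by
  have h0 : x ⬝ᵥ ((A * Aᵀ + B * Bᵀ) *ᵥ x) = 0 := by rw [h, dotProduct_zero]
  rw [Matrix.add_mulVec, dotProduct_add, quad_aux, quad_aux] at h0
  have h1 : (Aᵀ *ᵥ x) ⬝ᵥ (Aᵀ *ᵥ x) = 0 ∧ (Bᵀ *ᵥ x) ⬝ᵥ (Bᵀ *ᵥ x) = 0 := by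
    constructor <;> nlinarith [dot_self_nonneg (Aᵀ *ᵥ x), dot_self_nonneg (Bᵀ *ᵥ x)]
  exact ⟨dotProduct_self_eq_zero.mp h1.1, dotProduct_self_eq_zero.mp h1.2⟩

/-- For real matrices `A : b × a` and `B : b × c` with `Aᵀ · B = 0`
and `Δ = A·Aᵀ + B·Bᵀ`, the cycle space decomposes as the internal direct sum
`ker Aᵀ = ker Δ ⊕ range B`, the two summands being orthogonal for the standard
inner product on `ℝ^b`. -/
theorem cycle_space_decomposition (a b c : ℕ)
    (A : Matrix (Fin b) (Fin a) ℝ) (B : Matrix (Fin b) (Fin c) ℝ)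
    (hAB : Aᵀ * B = 0) :
    Disjoint (LinearMap.ker (A * Aᵀ + B * Bᵀ).mulVecLin)
        (LinearMap.range B.mulVecLin) ∧
    LinearMap.ker (A * Aᵀ + B * Bᵀ).mulVecLin ⊔ LinearMap.range B.mulVecLin =
      LinearMap.ker (Aᵀ).mulVecLin ∧
    (∀ x ∈ LinearMap.ker (A * Aᵀ + B * Bᵀ).mulVecLin,
      ∀ y ∈ LinearMap.range B.mulVecLin, x ⬝ᵥ y = 0) := by
  have orth : ∀ x ∈ LinearMap.ker (A * Aᵀ + B * Bᵀ).mulVecLin,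
      ∀ y ∈ LinearMap.range B.mulVecLin, x ⬝ᵥ y = 0 := by
    intro x hx y hy
    obtain ⟨w, rfl⟩ := hy
    have hker := ker_delta A B x hx
    simp only [Matrix.mulVecLin_apply, Matrix.dotProduct_mulVec]
    rw [show x ᵥ* B = Bᵀ *ᵥ x from by
      rw [← Matrix.transpose_transpose B, Matrix.vecMul_transpose, Matrix.transpose_transpose],
      hker.2, zero_dotProduct]
  refine ⟨?_, ?_, orth⟩
  · rw [Submodule.disjoint_def]
    intro x hx hx'
    have := orth x hx x hx'
    exact dotProduct_self_eq_zero.mp this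
  · apply le_antisymm
    · apply sup_le
      · intro x hx
        have hker := ker_delta A B x hx
        exact hker.1
      · rintro y ⟨w, rfl⟩
        simp only [LinearMap.mem_ker, Matrix.mulVecLin_apply, Matrix.mulVec_mulVec, hAB]
        simp
    · intro x hx
      have hx' : Aᵀ *ᵥ x = 0 := hx
      obtain ⟨v, hv⟩ := decomp_aux B x
      have hAz : Aᵀ *ᵥ (x - B *ᵥ v) = 0 := by
        rw [Matrix.mulVec_sub, hx', Matrix.mulVec_mulVec, hAB]
        simp
      have hz : (x - B *ᵥ v) ∈ LinearMap.ker (A * Aᵀ + B * Bᵀ).mulVecLin := by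
        simp only [LinearMap.mem_ker, Matrix.mulVecLin_apply, Matrix.add_mulVec,
          ← Matrix.mulVec_mulVec, hAz, hv]
        simp
      have : x = (x - B *ᵥ v) + B *ᵥ v := by ring
      rw [this]
      exact Submodule.add_mem_sup hz ⟨v, rfl⟩
end

section
/- (Deletion and the winding difference.) Let m ≥ 2 and let M be an m×(m−1) integer matrix with ℤ-linearly independent columns whose last row is nonzero; let n be the gcd of the entries of the last row of M. Then there exist an (m−1)×(m−2) integer matrix M_d with ℤ-linearly independent columns and ε ∈ {1, −1} such that for every z ∈ ℤ^m whose last coordinate is 0, det(z | M) = ε · n · det(z' | M_d), where z' ∈ ℤ^{m−1} is z with its last coordinate removed, and det(x | N) denotes the determinant of the square matrix whose first column is x and whose remaining columns are those of N. -/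
open Matrix

/-- The `m×m` integer matrix whose first column is `z` and whose remaining columns
are the columns of the `m×(m−1)` matrix `M` (here `m = k + 1`). -/
def colAugment {k : ℕ} (z : Fin (k + 1) → ℤ) (M : Matrix (Fin (k + 1)) (Fin k) ℤ) :
    Matrix (Fin (k + 1)) (Fin (k + 1)) ℤ :=
  (Matrix.of (Fin.cons (α := fun _ => Fin (k + 1) → ℤ) z fun j => fun i => M i j))ᵀ

namespace DelWind

@[simp] lemma colAugment_apply_zero {k : ℕ} (z : Fin (k + 1) → ℤ)
    (M : Matrix (Fin (k + 1)) (Fin k) ℤ) (i : Fin (k + 1)) :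
    colAugment z M i 0 = z i := rfl

@[simp] lemma colAugment_apply_succ {k : ℕ} (z : Fin (k + 1) → ℤ)
    (M : Matrix (Fin (k + 1)) (Fin k) ℤ) (i : Fin (k + 1)) (j : Fin k) :
    colAugment z M i j.succ = M i j := by
  simp [colAugment]

/-- The block matrix `1 ⊕ U` with the `1` in the upper-left corner. -/
def consBlock {k : ℕ} (U : Matrix (Fin k) (Fin k) ℤ) :
    Matrix (Fin (k + 1)) (Fin (k + 1)) ℤ :=
  Matrix.of (Fin.cons (Fin.cons 1 0) fun i => Fin.cons 0 (U i))

@[simp] lemma consBlock_zero_zero {k : ℕ} (U : Matrix (Fin k) (Fin k) ℤ) :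
    consBlock U 0 0 = 1 := rfl

@[simp] lemma consBlock_zero_succ {k : ℕ} (U : Matrix (Fin k) (Fin k) ℤ) (j : Fin k) :
    consBlock U 0 j.succ = 0 := by simp [consBlock]

@[simp] lemma consBlock_succ_zero {k : ℕ} (U : Matrix (Fin k) (Fin k) ℤ) (i : Fin k) :
    consBlock U i.succ 0 = 0 := by simp [consBlock]

@[simp] lemma consBlock_succ_succ {k : ℕ} (U : Matrix (Fin k) (Fin k) ℤ) (i j : Fin k) :
    consBlock U i.succ j.succ = U i j := by simp [consBlock]

lemma det_consBlock {k : ℕ} (U : Matrix (Fin k) (Fin k) ℤ) :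
    (consBlock U).det = U.det := by
  rw [Matrix.det_succ_row_zero, Fin.sum_univ_succ]
  have h1 : (consBlock U).submatrix Fin.succ Fin.succ = U := by
    ext i j
    simp
  simp [h1]

lemma vecMul_consBlock {k : ℕ} (v : Fin (k + 1) → ℤ) (U : Matrix (Fin k) (Fin k) ℤ) :
    v ᵥ* consBlock U = Fin.cons (v 0) ((fun i => v i.succ) ᵥ* U) := by
  funext j
  induction j using Fin.cases with
  | zero => simp [Matrix.vecMul, dotProduct, Fin.sum_univ_succ]
  | succ j => simp [Matrix.vecMul, dotProduct, Fin.sum_univ_succ]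

lemma colAugment_mul_consBlock {k : ℕ} (z : Fin (k + 2) → ℤ)
    (M : Matrix (Fin (k + 2)) (Fin (k + 1)) ℤ) (U : Matrix (Fin (k + 1)) (Fin (k + 1)) ℤ) :
    colAugment z M * consBlock U = colAugment z (M * U) := by
  ext i j
  rw [Matrix.mul_apply]
  induction j using Fin.cases with
  | zero => simp [Fin.sum_univ_succ]
  | succ j => simp [Fin.sum_univ_succ, Matrix.mul_apply]

/-- The obvious equivalence `Fin 2 ⊕ Fin k ≃ Fin (k + 2)` sending `inl i` to `i`
and `inr j` to `j + 2`. -/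
def e2 (k : ℕ) : Fin 2 ⊕ Fin k ≃ Fin (k + 2) where
  toFun := Sum.elim (fun i => ⟨i.val, by omega⟩) fun j => j.succ.succ
  invFun x := if h : (x : ℕ) < 2 then Sum.inl ⟨x, h⟩ else Sum.inr ⟨(x : ℕ) - 2, by omega⟩
  left_inv := by
    rintro (i | j)
    · simp [i.isLt]
    · have : ¬ ((j.succ.succ : Fin (k + 2)) : ℕ) < 2 := by simp [Fin.val_succ]
      simp only [Sum.elim_inr, this, dif_neg, not_false_iff]
      rfl
  right_inv x := by
    by_cases h : (x : ℕ) < 2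
    · simp [h]
    · simp only [dif_neg h, Sum.elim_inr]
      ext
      simp [Fin.val_succ]
      omega

lemma exists_unimodular_vecMul_gcd (k : ℕ) (v : Fin (k + 1) → ℤ) :
    ∃ U : Matrix (Fin (k + 1)) (Fin (k + 1)) ℤ, IsUnit U.det ∧
      v ᵥ* U = Fin.cons (Finset.univ.gcd v) 0 := by
  induction k with
  | zero =>
    refine ⟨Matrix.of ![![if 0 ≤ v 0 then 1 else -1]], ?_, ?_⟩
    · rw [Matrix.det_fin_one]
      split
      · exact isUnit_one
      · exact isUnit_one.neg
    · funext j
      have hj : j = 0 := by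
        refine Fin.ext ?_
        have := j.isLt
        omega
      subst hj
      have huniv : (Finset.univ : Finset (Fin 1)) = {0} := rfl
      rw [huniv, Finset.gcd_singleton]
      rcases le_or_gt 0 (v 0) with h | h
      · simp [Matrix.vecMul, dotProduct, h, Int.normalize_of_nonneg h]
      · simp [Matrix.vecMul, dotProduct, not_le.mpr h, Int.normalize_of_nonpos h.le]
  | succ k ih =>
    obtain ⟨U', hU'det, hU'⟩ := ih (fun i => v i.succ)
    set a : ℤ := v 0 with ha
    set b : ℤ := Finset.univ.gcd (fun i : Fin (k + 1) => v i.succ) with hb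
    have hgcd : Finset.univ.gcd v = gcd a b := by
      rw [Fin.univ_succ, Finset.cons_eq_insert, Finset.gcd_insert, Finset.map_eq_image,
        Finset.gcd_image]
      rfl
    by_cases hd : gcd a b = 0
    · have ha0 : a = 0 := ((gcd_eq_zero_iff _ _).mp hd).1
      have hb0 : b = 0 := ((gcd_eq_zero_iff _ _).mp hd).2
      refine ⟨consBlock U', by rwa [det_consBlock], ?_⟩
      rw [vecMul_consBlock, hU', hgcd, hd, ← ha, ha0, hb0]
      funext j
      induction j using Fin.cases with
      | zero => rfl
      | succ j =>
        rw [Fin.cons_succ]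
        induction j using Fin.cases with
        | zero => rfl
        | succ j => rfl
    · set d : ℤ := gcd a b with hdd
      set p : ℤ := Int.gcdA a b with hp
      set q : ℤ := Int.gcdB a b with hq
      have hBez : a * p + b * q = d := by
        have h1 := Int.gcd_eq_gcd_ab a b
        rw [Int.coe_gcd] at h1
        exact h1.symm
      have hda : d ∣ a := gcd_dvd_left a b
      have hdb : d ∣ b := gcd_dvd_right a b
      set B : Matrix (Fin 2) (Fin 2) ℤ := !![p, -(b / d); q, a / d] with hB
      have hBdet : B.det = 1 := by
        rw [hB, Matrix.det_fin_two_of]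
        refine mul_left_cancel₀ hd ?_
        have h1 : d * (a / d) = a := Int.mul_ediv_cancel' hda
        have h2 : d * (b / d) = b := Int.mul_ediv_cancel' hdb
        calc d * (p * (a / d) - -(b / d) * q)
            = p * (d * (a / d)) + q * (d * (b / d)) := by ring
          _ = a * p + b * q := by rw [h1, h2]; ring
          _ = d * 1 := by rw [hBez, mul_one]
      refine ⟨consBlock U' *
        ((fromBlocks B 0 0 (1 : Matrix (Fin k) (Fin k) ℤ)).submatrix (e2 k).symm (e2 k).symm),
        ?_, ?_⟩
      · rw [Matrix.det_mul, det_consBlock, Matrix.det_submatrix_equiv_self,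
          Matrix.det_fromBlocks_zero₂₁, hBdet, Matrix.det_one, mul_one, mul_one]
        exact hU'det
      · rw [← Matrix.vecMul_vecMul, vecMul_consBlock, hU', Matrix.submatrix_vecMul_equiv]
        set x : Fin (k + 2) → ℤ := Fin.cons a (Fin.cons b 0) with hx
        have hxe : x ∘ (e2 k).symm.symm = Sum.elim ![a, b] 0 := by
          funext s
          rcases s with i | j
          · fin_cases i <;> rfl
          · show x (j.succ.succ) = 0
            simp [hx]
        rw [hxe, Matrix.vecMul_fromBlocks]
        have hleft : (Sum.elim ![a, b] (0 : Fin k → ℤ)) ∘ Sum.inl = ![a, b] := rfl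
        have hright : (Sum.elim ![a, b] (0 : Fin k → ℤ)) ∘ Sum.inr = 0 := rfl
        rw [hleft, hright]
        have hvB : (![a, b] ᵥ* B) = ![d, 0] := by
          funext j
          fin_cases j
          · simp [hB, Matrix.vecMul, dotProduct, Fin.sum_univ_two]
            linarith [hBez]
          · have hab : a * (b / d) = b * (a / d) := by
              rw [← Int.mul_ediv_assoc a hdb, ← Int.mul_ediv_assoc b hda, mul_comm]
            simp [hB, Matrix.vecMul, dotProduct, Fin.sum_univ_two]
            linarith [hab]
        rw [hvB]
        simp only [Matrix.vecMul_zero, Matrix.zero_vecMul, add_zero, zero_add,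
          Matrix.vecMul_one]
        funext j
        rw [hgcd]
        induction j using Fin.cases with
        | zero =>
          have he : (e2 k).symm 0 = Sum.inl 0 := by
            rw [Equiv.symm_apply_eq]
            simp [e2, Fin.ext_iff]
          simp only [Function.comp_apply, he, Sum.elim_inl, Fin.cons_zero]
          simp
        | succ j =>
          simp only [Function.comp_apply, Fin.cons_succ]
          induction j using Fin.cases with
          | zero =>
            have he : (e2 k).symm ((0 : Fin (k + 1)).succ) = Sum.inl 1 := by
              rw [Equiv.symm_apply_eq]
              simp [e2, Fin.ext_iff]
            rw [he]
            simp
          | succ j' =>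
            have he : (e2 k).symm (j'.succ.succ) = Sum.inr j' := by
              rw [Equiv.symm_apply_eq]
              rfl
            rw [he]
            simp

end DelWind

open DelWind
/-- **Deletion and the winding difference.** Let `M` be an
`m×(m−1)` integer matrix (`m = n + 2 ≥ 2`) with ℤ-linearly independent columns and
nonzero last row, and let `g` be the gcd of the entries of the last row. Then there
exist an `(m−1)×(m−2)` integer matrix `M_d` with ℤ-linearly independent columns and
a sign `ε ∈ {1, −1}` such that for every `z ∈ ℤ^m` with last coordinate `0`,
`det(z | M) = ε · g · det(z' | M_d)` where `z'` is `z` with its last coordinate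
removed. -/
theorem deletion_winding_difference (n : ℕ)
    (M : Matrix (Fin (n + 2)) (Fin (n + 1)) ℤ)
    (hM : LinearIndependent ℤ (fun j : Fin (n + 1) => fun i => M i j))
    (hrow : ∃ j, M (Fin.last (n + 1)) j ≠ 0) :
    ∃ (Md : Matrix (Fin (n + 1)) (Fin n) ℤ) (ε : ℤ),
      LinearIndependent ℤ (fun j : Fin n => fun i => Md i j) ∧
      (ε = 1 ∨ ε = -1) ∧
      ∀ z : Fin (n + 2) → ℤ, z (Fin.last (n + 1)) = 0 →
        (colAugment z M).det =
          ε * (Finset.univ.gcd fun j : Fin (n + 1) => M (Fin.last (n + 1)) j) *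
            (colAugment (fun i => z i.castSucc) Md).det := by
  classical
  set v : Fin (n + 1) → ℤ := fun j => M (Fin.last (n + 1)) j with hv
  obtain ⟨U, hUdet, hvU⟩ := exists_unimodular_vecMul_gcd n v
  set g : ℤ := Finset.univ.gcd v with hg
  set M' : Matrix (Fin (n + 2)) (Fin (n + 1)) ℤ := M * U with hM'
  have hM'last : ∀ j, M' (Fin.last (n + 1)) j = (Fin.cons g (0 : Fin n → ℤ) : Fin (n + 1) → ℤ) j := by
    intro j
    have h1 := congrFun hvU j
    rw [hM', Matrix.mul_apply]
    simpa [Matrix.vecMul, dotProduct, hv] using h1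
  -- kernel triviality results
  have hUinj : ∀ c : Fin (n + 1) → ℤ, U.mulVec c = 0 → c = 0 := by
    intro c hc
    have h2 := congrArg (fun w => (U⁻¹).mulVec w) hc
    simpa [Matrix.mulVec_mulVec, Matrix.nonsing_inv_mul U hUdet] using h2
  have hMker : ∀ c : Fin (n + 1) → ℤ, M.mulVec c = 0 → c = 0 := by
    intro c hc
    have h3 := Fintype.linearIndependent_iff.mp hM c ?_
    · funext j; exact h3 j
    · funext i
      have := congrFun hc i
      simpa [Matrix.mulVec, dotProduct, Finset.sum_apply, mul_comm] using this
  have hM'ker : ∀ c : Fin (n + 1) → ℤ, M'.mulVec c = 0 → c = 0 := by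
    intro c hc
    rw [hM', ← Matrix.mulVec_mulVec] at hc
    exact hUinj c (hMker _ hc)
  set Md : Matrix (Fin (n + 1)) (Fin n) ℤ :=
    Matrix.of fun i j => M' (Fin.castSucc i) (Fin.succ j) with hMd
  have hMdli : LinearIndependent ℤ (fun j : Fin n => fun i => Md i j) := by
    rw [Fintype.linearIndependent_iff]
    intro c hc j
    set c' : Fin (n + 1) → ℤ := Fin.cons 0 c with hc'
    have hker : M'.mulVec c' = 0 := by
      funext i
      induction i using Fin.lastCases with
      | last =>
        rw [Matrix.mulVec, dotProduct, Fin.sum_univ_succ]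
        simp only [hc', Fin.cons_zero, Fin.cons_succ, mul_zero, zero_add, Pi.zero_apply]
        rw [Finset.sum_eq_zero]
        intro j' _
        rw [hM'last]
        simp
      | cast i =>
        have h4 := congrFun hc i
        rw [Matrix.mulVec, dotProduct, Fin.sum_univ_succ]
        simp only [hc', Fin.cons_zero, Fin.cons_succ, mul_zero, zero_add, Pi.zero_apply]
        simpa [hMd, Finset.sum_apply, mul_comm] using h4
    have h5 := hM'ker c' hker
    have := congrFun h5 j.succ
    simpa [hc'] using this
  have hUsgn := Int.isUnit_iff.mp hUdet
  refine ⟨Md, U.det * (-1) ^ (n + 2), hMdli, ?_, ?_⟩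
  · rcases hUsgn with h | h <;> rcases neg_one_pow_eq_or ℤ (n + 2) with h' | h' <;>
      rw [h, h'] <;> norm_num
  · intro z hz
    set D : ℤ := (colAugment (fun i => z i.castSucc) Md).det with hD
    have key : (colAugment z M).det * U.det = (-1) ^ (n + 2) * g * D := by
      have hdet1 : (colAugment z M').det = (colAugment z M).det * U.det := by
        rw [hM', ← colAugment_mul_consBlock, Matrix.det_mul, det_consBlock]
      rw [← hdet1]
      rw [Matrix.det_succ_row (colAugment z M') (Fin.last (n + 1))]
      rw [Fin.sum_univ_succ, Fin.sum_univ_succ]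
      have ht0 : colAugment z M' (Fin.last (n + 1)) 0 = 0 := by
        rw [colAugment_apply_zero]; exact hz
      have ht1 : colAugment z M' (Fin.last (n + 1)) ((0 : Fin (n + 1)).succ) = g := by
        rw [colAugment_apply_succ, hM'last, Fin.cons_zero]
      have htrest : ∀ j : Fin n,
          colAugment z M' (Fin.last (n + 1)) ((j.succ).succ) = 0 := by
        intro j
        rw [colAugment_apply_succ, hM'last, Fin.cons_succ]
        rfl
      rw [ht0, ht1]
      rw [Finset.sum_eq_zero (by intro j _; rw [htrest]; ring)]
      have hminor : (colAugment z M').submatrix (Fin.last (n + 1)).succAbove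
          ((0 : Fin (n + 1)).succ).succAbove = colAugment (fun i => z i.castSucc) Md := by
        ext i j
        rw [Matrix.submatrix_apply, Fin.succAbove_last]
        induction j using Fin.cases with
        | zero =>
          have h0 : ((0 : Fin (n + 1)).succ).succAbove 0 = 0 := by
            rw [Fin.succAbove_of_castSucc_lt]
            · rfl
            · simp [Fin.lt_iff_val_lt_val]
          rw [h0, colAugment_apply_zero, colAugment_apply_zero]
        | succ j =>
          have hsj : ((0 : Fin (n + 1)).succ).succAbove j.succ = (j.succ).succ := by
            rw [Fin.succAbove_of_le_castSucc]
            simp [Fin.le_iff_val_le_val, Fin.val_succ]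
          rw [hsj, colAugment_apply_succ, colAugment_apply_succ]
          rfl
      rw [hminor, ← hD]
      have hpow : ((Fin.last (n + 1) : Fin (n + 2)) : ℕ) + (((0 : Fin (n + 1)).succ : Fin (n + 2)) : ℕ)
          = n + 2 := by
        simp [Fin.val_last, Fin.val_succ]
      rw [hpow]
      ring
    have hsq : U.det * U.det = 1 := by rcases hUsgn with h | h <;> rw [h] <;> norm_num
    calc (colAugment z M).det
        = (colAugment z M).det * U.det * U.det := by rw [mul_assoc, hsq, mul_one]
      _ = (-1) ^ (n + 2) * g * D * U.det := by rw [key]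
      _ = U.det * (-1) ^ (n + 2) *
          (Finset.univ.gcd fun j : Fin (n + 1) => M (Fin.last (n + 1)) j) * D := by
        rw [hg, hv]; ring
end

section
/- Suppose the row of the unicyclizer ∂ indexed by some edge σ of G is the zero vector. Then λ_{−σ} = 0, where λ_{−σ} = Σ_{Y cycletree of G with σ ∉ E(Y)} w(z_Y)·z_Y is the part of the standard harmonic cycle coming from cycletrees not containing σ. -/
open Matrix

/-- Oriented incidence matrix of a simple graph on a linearly ordered vertex set:
the column at an edge `e` with endpoints `u < v` has entry `−1` at `u`, `+1` at `v`,
and `0` elsewhere. -/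
def incMat {V : Type} [Fintype V] [LinearOrder V] (G : SimpleGraph V)
    [DecidableRel G.Adj] : Matrix V G.edgeSet ℤ :=
  fun v e =>
    Sym2.lift ⟨fun a b =>
        (if v = a ⊔ b then (1 : ℤ) else 0) - (if v = a ⊓ b then (1 : ℤ) else 0),
      fun a b => by simp only [sup_comm, inf_comm]⟩ e.1

/-- The cycle space `Z₁(G) = ker ∂₁ ⊆ ℤ^E`. -/
def cycleSpace {V : Type} [Fintype V] [LinearOrder V] (G : SimpleGraph V)
    [DecidableRel G.Adj] : Submodule ℤ (G.edgeSet → ℤ) :=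
  LinearMap.ker (incMat G).mulVecLin

/-- The winding number `w(z) = det([z]_β, [∂]_β)` of `z ∈ Z₁(G)` with respect to a
unicyclizer `D` (whose columns lie in the cycle space) and a basis `β` of the
cycle space; junk value `0` off the cycle space. -/
noncomputable def winding {V : Type} [Fintype V] [LinearOrder V] (G : SimpleGraph V)
    [DecidableRel G.Adj] {n : ℕ} (β : Module.Basis (Fin (n + 1)) ℤ (cycleSpace G))
    (D : Matrix G.edgeSet (Fin n) ℤ) (hD : ∀ j, (fun e => D e j) ∈ cycleSpace G)
    (z : G.edgeSet → ℤ) : ℤ :=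
  @dite ℤ (z ∈ cycleSpace G) (Classical.dec _)
    (fun hz =>
      (Matrix.of fun i j : Fin (n + 1) =>
        β.repr (Fin.cons (α := fun _ => cycleSpace G) ⟨z, hz⟩
          (fun k => ⟨fun e => D e k, hD k⟩) j) i).det)
    (fun _ => 0)

/-- A cycletree of `G`: a connected spanning subgraph with exactly `|V|` edges. -/
def IsCycletree {V : Type} [Fintype V] (G Y : SimpleGraph V) : Prop :=
  Y ≤ G ∧ Y.Connected ∧ Y.edgeSet.ncard = Fintype.card V

/-- The standard harmonic cycle `λ = Σ_Y w(z_Y)·z_Y`, the sum over all cycletrees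
`Y` of `G`, for a given choice `zY` of cycle vectors. -/
noncomputable def stdHarmonic {V : Type} [Fintype V] [LinearOrder V]
    (G : SimpleGraph V) [DecidableRel G.Adj] {n : ℕ}
    (β : Module.Basis (Fin (n + 1)) ℤ (cycleSpace G))
    (D : Matrix G.edgeSet (Fin n) ℤ) (hD : ∀ j, (fun e => D e j) ∈ cycleSpace G)
    (zY : SimpleGraph V → (G.edgeSet → ℤ)) : G.edgeSet → ℤ :=
  ∑ᶠ Y ∈ {Y : SimpleGraph V | IsCycletree G Y}, winding G β D hD (zY Y) • zY Y

/-- The property that `zY` selects, for each cycletree `Y` of `G`, a cycle vector of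
`Y`: a nonzero element of the cycle space with entries in `{−1, 0, 1}` supported on
the edges of `Y`. -/
def IsCycleVectorChoice {V : Type} [Fintype V] [LinearOrder V] (G : SimpleGraph V)
    [DecidableRel G.Adj] (zY : SimpleGraph V → (G.edgeSet → ℤ)) : Prop :=
  ∀ Y : SimpleGraph V, IsCycletree G Y →
    zY Y ∈ cycleSpace G ∧ zY Y ≠ 0 ∧
    (∀ e, zY Y e = -1 ∨ zY Y e = 0 ∨ zY Y e = 1) ∧
    (∀ e : G.edgeSet, zY Y e ≠ 0 → (e : Sym2 V) ∈ Y.edgeSet)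

/-- The tree number `k(G)`: the number of spanning trees of `G`. -/
noncomputable def treeNumber {V : Type} (G : SimpleGraph V) : ℕ :=
  {T : SimpleGraph V | T ≤ G ∧ T.IsTree}.ncard


section Aux

open SimpleGraph

variable {V : Type} [Fintype V] [LinearOrder V] (G : SimpleGraph V) [DecidableRel G.Adj]

/-- Elementary signed flow along an oriented edge. -/
def echi (a b : V) : G.edgeSet → ℤ :=
  fun e => if (e : Sym2 V) = s(a, b) then (if a ≤ b then 1 else -1) else 0

/-- Signed flow of a walk. -/
def wflow : {a b : V} → G.Walk a b → (G.edgeSet → ℤ)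
  | _, _, SimpleGraph.Walk.nil => 0
  | _, _, SimpleGraph.Walk.cons (u := a) (v := c) _ p => echi G a c + wflow p

@[simp] lemma wflow_nil {a : V} : wflow G (SimpleGraph.Walk.nil : G.Walk a a) = 0 := rfl

@[simp] lemma wflow_cons {a c b : V} (h : G.Adj a c) (p : G.Walk c b) :
    wflow G (SimpleGraph.Walk.cons h p) = echi G a c + wflow G p := rfl

lemma mulVec_echi {a b : V} (h : G.Adj a b) :
    (incMat G).mulVec (echi G a b) =
      fun w => (if w = b then (1 : ℤ) else 0) - (if w = a then 1 else 0) := by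
  funext w
  have hmem : s(a, b) ∈ G.edgeSet := h
  have hsum : (incMat G).mulVec (echi G a b) w
      = incMat G w ⟨s(a, b), hmem⟩ * echi G a b ⟨s(a, b), hmem⟩ := by
    rw [Matrix.mulVec, dotProduct]
    refine Finset.sum_eq_single _ (fun e _ hne => ?_)
      (fun habs => absurd (Finset.mem_univ _) habs)
    have hne' : (e : Sym2 V) ≠ s(a, b) := fun hh => hne (Subtype.ext hh)
    simp [echi, hne']
  rw [hsum]
  have hinc : incMat G w ⟨s(a, b), hmem⟩
      = (if w = a ⊔ b then (1 : ℤ) else 0) - (if w = a ⊓ b then 1 else 0) := rfl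
  have hech : echi G a b ⟨s(a, b), hmem⟩ = if a ≤ b then (1 : ℤ) else -1 := by
    simp [echi]
  rw [hinc, hech]
  rcases le_or_gt a b with hle | hlt
  · rw [sup_eq_right.mpr hle, inf_eq_left.mpr hle, if_pos hle]; ring
  · rw [sup_eq_left.mpr hlt.le, inf_eq_right.mpr hlt.le, if_neg (not_le.mpr hlt)]; ring

lemma mulVec_wflow {a b : V} (p : G.Walk a b) :
    (incMat G).mulVec (wflow G p) =
      fun w => (if w = b then (1 : ℤ) else 0) - (if w = a then 1 else 0) := by
  induction p with
  | nil => funext w; simp [wflow_nil, Matrix.mulVec_zero]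
  | cons h p ih =>
    rw [wflow_cons, Matrix.mulVec_add, ih, mulVec_echi G h]
    funext w; simp only [Pi.add_apply]; ring

lemma wflow_eq_zero {a b : V} (p : G.Walk a b) (e : G.edgeSet)
    (he : (e : Sym2 V) ∉ p.edges) : wflow G p e = 0 := by
  induction p with
  | nil => rfl
  | cons h p ih =>
    rw [SimpleGraph.Walk.edges_cons, List.mem_cons] at he
    push_neg at he
    rw [wflow_cons, Pi.add_apply, ih he.2]
    simp [echi, he.1]

lemma exists_cycle_through (Y : SimpleGraph V) (hle : Y ≤ G) (hconn : Y.Connected)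
    (σ : G.edgeSet) (hσ : (σ : Sym2 V) ∉ Y.edgeSet) :
    ∃ z ∈ cycleSpace G, z σ ≠ 0 := by
  obtain ⟨u, v, huv⟩ : ∃ u v, (σ : Sym2 V) = s(u, v) :=
    Sym2.ind (fun a b => ⟨a, b, rfl⟩) (σ : Sym2 V)
  have hadj : G.Adj u v := G.mem_edgeSet.mp (huv ▸ σ.2)
  obtain ⟨p⟩ : Y.Reachable v u := hconn.preconnected v u
  set q : G.Walk v u := p.mapLe hle with hq
  refine ⟨wflow G (SimpleGraph.Walk.cons hadj q), ?_, ?_⟩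
  · rw [cycleSpace, LinearMap.mem_ker, Matrix.mulVecLin_apply, mulVec_wflow]
    funext w; simp
  · have hq0 : wflow G q σ = 0 := by
      apply wflow_eq_zero
      intro hmem
      have hfun : ⇑(SimpleGraph.Hom.ofLE hle) = id := rfl
      rw [hq, SimpleGraph.Walk.mapLe, SimpleGraph.Walk.edges_map, hfun, Sym2.map_id,
        List.map_id] at hmem
      exact hσ (p.edges_subset_edgeSet hmem)
    have hech : echi G u v σ = if u ≤ v then 1 else -1 := by simp [echi, huv]
    rw [wflow_cons, Pi.add_apply, hq0, add_zero, hech]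
    split_ifs <;> norm_num

lemma det_aux {n : ℕ} (β : Module.Basis (Fin (n + 1)) ℤ (cycleSpace G)) (σ : G.edgeSet)
    (z₀ : G.edgeSet → ℤ) (hz₀ : z₀ ∈ cycleSpace G) (hz₀σ : z₀ σ ≠ 0)
    (w : Fin (n + 1) → cycleSpace G) (hw0 : ∀ j, (w j : G.edgeSet → ℤ) σ = 0) :
    (Matrix.of fun i j : Fin (n + 1) => β.repr (w j) i).det = 0 := by
  have hdep : ¬ LinearIndependent ℤ w := by
    intro hli
    have hval : LinearIndependent ℤ (fun j => (w j : G.edgeSet → ℤ)) :=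
      hli.map' (Submodule.subtype _) (Submodule.ker_subtype _)
    have hconsval : LinearIndependent ℤ
        (Fin.cons z₀ (fun j => (w j : G.edgeSet → ℤ)) : Fin (n + 2) → G.edgeSet → ℤ) := by
      rw [Fintype.linearIndependent_iff]
      intro g hg
      have hg0 : g 0 = 0 := by
        have h1 := congrFun hg σ
        simp only [Finset.sum_apply, Pi.smul_apply, smul_eq_mul, Pi.zero_apply,
          Fin.sum_univ_succ, Fin.cons_zero, Fin.cons_succ, hw0, mul_zero,
          Finset.sum_const_zero, add_zero] at h1
        exact (mul_eq_zero.mp h1).resolve_right hz₀σ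
      have hsucc : ∀ j : Fin (n + 1), g j.succ = 0 := by
        have h2 : ∑ j : Fin (n + 1), g j.succ • (w j : G.edgeSet → ℤ) = 0 := by
          rw [Fin.sum_univ_succ, hg0, zero_smul, zero_add] at hg
          simpa [Fin.cons_succ] using hg
        exact fun j => Fintype.linearIndependent_iff.mp hval _ h2 j
      intro i
      exact Fin.cases hg0 hsucc i
    have hconsSub : LinearIndependent ℤ
        (Fin.cons (⟨z₀, hz₀⟩ : cycleSpace G) w : Fin (n + 2) → cycleSpace G) := by
      apply LinearIndependent.of_comp (Submodule.subtype (cycleSpace G))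
      have hcc : ⇑(Submodule.subtype (cycleSpace G)) ∘
            (Fin.cons (⟨z₀, hz₀⟩ : cycleSpace G) w : Fin (n + 2) → cycleSpace G)
          = (Fin.cons z₀ (fun j => (w j : G.edgeSet → ℤ)) : Fin (n + 2) → G.edgeSet → ℤ) := by
        funext i
        exact Fin.cases rfl (fun j => rfl) i
      rw [hcc]
      exact hconsval
    have hcard := β.card_le_card_of_linearIndependent hconsSub
    simp [Fintype.card_fin] at hcard
  obtain ⟨g, hg, i, hgi⟩ := Fintype.not_linearIndependent_iff.mp hdep
  refine Matrix.exists_mulVec_eq_zero_iff.mp ⟨g, fun h0 => hgi (congrFun h0 i), ?_⟩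
  funext i'
  show (∑ j, (Matrix.of fun i j : Fin (n + 1) => β.repr (w j) i) i' j * g j) = 0
  calc ∑ j, (Matrix.of fun i j : Fin (n + 1) => β.repr (w j) i) i' j * g j
      = ∑ j, (β.repr (g j • w j)) i' := by
        refine Finset.sum_congr rfl fun j _ => ?_
        rw [_root_.map_smul]
        simp [Matrix.of_apply, mul_comm]
    _ = (β.repr (∑ j, g j • w j)) i' := by
        rw [map_sum, Finsupp.finset_sum_apply]
    _ = 0 := by rw [hg]; simp

end Aux

/-- If the row of the unicyclizer `∂` indexed by an edge `σ` of `G`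
is zero, then `λ_{−σ} = Σ_{Y cycletree, σ ∉ E(Y)} w(z_Y)·z_Y = 0`: the part of the
standard harmonic cycle coming from cycletrees not containing `σ` vanishes. -/
theorem lambda_minus_sigma_eq_zero {V : Type} [Fintype V] [LinearOrder V]
    (G : SimpleGraph V) [DecidableRel G.Adj] (hG : G.Connected) {n : ℕ}
    (β : Module.Basis (Fin (n + 1)) ℤ (cycleSpace G))
    (D : Matrix G.edgeSet (Fin n) ℤ)
    (hD : ∀ j, (fun e => D e j) ∈ cycleSpace G)
    (hDli : LinearIndependent ℤ (fun j : Fin n => fun e => D e j))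
    (zY : SimpleGraph V → (G.edgeSet → ℤ)) (hzY : IsCycleVectorChoice G zY)
    (σ : G.edgeSet) (hσ : ∀ j, D σ j = 0) :
    ∑ᶠ Y ∈ {Y : SimpleGraph V | IsCycletree G Y ∧ (σ : Sym2 V) ∉ Y.edgeSet},
      winding G β D hD (zY Y) • zY Y = (0 : G.edgeSet → ℤ) := by
  by_cases hall : ∀ z ∈ cycleSpace G, z σ = 0
  · have hset : {Y : SimpleGraph V | IsCycletree G Y ∧ (σ : Sym2 V) ∉ Y.edgeSet} = ∅ := by
      ext Y
      simp only [Set.mem_setOf_eq, Set.mem_empty_iff_false, iff_false, not_and]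
      rintro ⟨hle, hconn, -⟩ hns
      obtain ⟨z, hz, hzσ⟩ := exists_cycle_through G Y hle hconn σ hns
      exact hzσ (hall z hz)
    rw [hset, finsum_mem_empty]
  · push_neg at hall
    obtain ⟨z₀, hz₀, hz₀σ⟩ := hall
    apply finsum_mem_of_eqOn_zero
    intro Y hY
    show winding G β D hD (zY Y) • zY Y = 0
    obtain ⟨hYct, hYσ⟩ := hY
    obtain ⟨hzmem, -, -, hsupp⟩ := hzY Y hYct
    have hw0 : ∀ j, ((Fin.cons (α := fun _ => cycleSpace G) ⟨zY Y, hzmem⟩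
        (fun k => ⟨fun e => D e k, hD k⟩) j : cycleSpace G) : G.edgeSet → ℤ) σ = 0 := by
      intro j
      refine Fin.cases ?_ (fun k => hσ k) j
      show zY Y σ = 0
      by_contra hne
      exact hYσ (hsupp σ hne)
    have hwind : winding G β D hD (zY Y) = 0 := by
      unfold winding
      rw [dif_pos hzmem]
      exact det_aux G β σ z₀ hz₀ hz₀σ _ hw0
    rw [hwind, zero_smul]
end

section
/- Let σ be an edge of G that is not a bridge (i.e., deleting σ leaves G connected), and suppose the row of the unicyclizer ∂ indexed by σ is the zero vector. Then every z ∈ Z₁(G) whose coordinate at σ is 0 satisfies w(z) = 0. -/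
open Matrix

-- aux: single-edge chain
def chainOf {V : Type} [Fintype V] [LinearOrder V] (G : SimpleGraph V)
    [DecidableRel G.Adj] (a b : V) : G.edgeSet → ℤ :=
  fun e => if (e : Sym2 V) = s(a, b) then (if a < b then 1 else -1) else 0

lemma chainOf_mulVec {V : Type} [Fintype V] [LinearOrder V] (G : SimpleGraph V)
    [DecidableRel G.Adj] {a b : V} (h : G.Adj a b) :
    (incMat G).mulVecLin (chainOf G a b) =
      fun w => (if w = b then (1:ℤ) else 0) - (if w = a then 1 else 0) := by
  funext w
  have hmem : s(a, b) ∈ G.edgeSet := h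
  have : (incMat G).mulVecLin (chainOf G a b) w
      = ∑ e : G.edgeSet, incMat G w e * chainOf G a b e := by
    simp [mulVecLin_apply, mulVec, dotProduct]
  rw [this]
  rw [Finset.sum_eq_single (⟨s(a,b), hmem⟩ : G.edgeSet)]
  · have hab : a ≠ b := h.ne
    simp only [chainOf, incMat, Sym2.lift_mk, if_pos rfl]
    rcases lt_or_gt_of_ne hab with hlt | hlt
    · rw [if_pos hlt, sup_eq_right.mpr hlt.le, inf_eq_left.mpr hlt.le]
      simp only [if_true]; ring
    · rw [if_neg (not_lt.mpr hlt.le), sup_eq_left.mpr hlt.le, inf_eq_right.mpr hlt.le]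
      simp only [if_true]; ring
  · intro e _ hne
    have : (e : Sym2 V) ≠ s(a,b) := fun hh => hne (Subtype.ext hh)
    simp [chainOf, this]
  · intro hh
    exact absurd (Finset.mem_univ _) hh

def flowOf {V : Type} [Fintype V] [LinearOrder V] (G : SimpleGraph V)
    [DecidableRel G.Adj] : ∀ {a b : V}, G.Walk a b → (G.edgeSet → ℤ)
  | _, _, SimpleGraph.Walk.nil => 0
  | _, _, @SimpleGraph.Walk.cons _ _ a c _ h p => chainOf G a c + flowOf G p

lemma flowOf_mulVec {V : Type} [Fintype V] [LinearOrder V] (G : SimpleGraph V)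
    [DecidableRel G.Adj] {a b : V} (p : G.Walk a b) :
    (incMat G).mulVecLin (flowOf G p) =
      fun w => (if w = b then (1:ℤ) else 0) - (if w = a then 1 else 0) := by
  induction p with
  | nil => funext w; simp [flowOf]
  | cons h p ih =>
    rename_i u c d
    rw [flowOf, map_add, chainOf_mulVec G h, ih]
    funext w
    simp only [Pi.add_apply]
    ring

lemma flowOf_eval {V : Type} [Fintype V] [LinearOrder V] (G : SimpleGraph V)
    [DecidableRel G.Adj] {a b : V} (p : G.Walk a b) (σ : G.edgeSet)
    (hσ : (σ : Sym2 V) ∉ p.edges) : flowOf G p σ = 0 := by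
  induction p with
  | nil => rfl
  | cons h p ih =>
    rename_i u c d
    rw [SimpleGraph.Walk.edges_cons] at hσ
    simp only [List.mem_cons, not_or] at hσ
    rw [flowOf, Pi.add_apply, ih hσ.2]
    simp [chainOf, hσ.1]

lemma exists_cycle_through_s13 {V : Type} [Fintype V] [LinearOrder V] (G : SimpleGraph V)
    [DecidableRel G.Adj] (σ : G.edgeSet)
    (hnb : (G.deleteEdges {(σ : Sym2 V)}).Connected) :
    ∃ z' ∈ cycleSpace G, z' σ ≠ 0 := by
  obtain ⟨e, he⟩ := σ
  induction e using Sym2.inductionOn with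
  | hf u v =>
  have hadj : G.Adj u v := he
  -- walk from v to u avoiding σ
  obtain ⟨q⟩ := (hnb.preconnected v u)
  have hq : ∀ e ∈ q.edges, e ∈ G.edgeSet := by
    intro e hee
    have := q.edges_subset_edgeSet hee
    rw [SimpleGraph.edgeSet_deleteEdges] at this
    exact this.1
  set p : G.Walk v u := q.transfer G hq with hp
  refine ⟨chainOf G u v + flowOf G p, ?_, ?_⟩
  · show _ ∈ LinearMap.ker _
    rw [LinearMap.mem_ker, map_add, chainOf_mulVec G hadj, flowOf_mulVec G p]
    funext w
    simp only [Pi.add_apply, Pi.zero_apply]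
    ring
  · have hpe : s(u, v) ∉ p.edges := by
      rw [hp, SimpleGraph.Walk.edges_transfer]
      intro hmem
      have := q.edges_subset_edgeSet hmem
      rw [SimpleGraph.edgeSet_deleteEdges] at this
      exact this.2 rfl
    rw [Pi.add_apply, flowOf_eval G p _ hpe]
    have : chainOf G u v ⟨s(u,v), he⟩ = if u < v then 1 else -1 := by
      simp [chainOf]
    rw [this, add_zero]
    split <;> simp

-- sum_repr evaluation lemma
lemma repr_eval {V : Type} [Fintype V] [LinearOrder V] (G : SimpleGraph V)
    [DecidableRel G.Adj] {n : ℕ} (β : Module.Basis (Fin (n + 1)) ℤ (cycleSpace G))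
    (w : cycleSpace G) (σ : G.edgeSet) :
    ∑ i, β.repr w i * ((β i : G.edgeSet → ℤ) σ) = (w : G.edgeSet → ℤ) σ := by
  conv_rhs => rw [← β.sum_repr w]
  push_cast
  rw [Finset.sum_apply]
  simp [Submodule.coe_smul]

set_option maxHeartbeats 1000000 in
/-- Let `σ` be an edge of `G` that is not a bridge (deleting `σ`
leaves `G` connected), and suppose the row of the unicyclizer `∂` indexed by `σ` is
zero. Then every `z ∈ Z₁(G)` whose coordinate at `σ` is `0` has winding number
`w(z) = 0`. -/
theorem winding_eq_zero_of_zero_row {V : Type} [Fintype V] [LinearOrder V]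
    (G : SimpleGraph V) [DecidableRel G.Adj] (hG : G.Connected) {n : ℕ}
    (β : Module.Basis (Fin (n + 1)) ℤ (cycleSpace G))
    (D : Matrix G.edgeSet (Fin n) ℤ)
    (hD : ∀ j, (fun e => D e j) ∈ cycleSpace G)
    (hDli : LinearIndependent ℤ (fun j : Fin n => fun e => D e j))
    (σ : G.edgeSet)
    (hnb : (G.deleteEdges {(σ : Sym2 V)}).Connected)
    (hσ : ∀ j, D σ j = 0) :
    ∀ z ∈ cycleSpace G, z σ = 0 → winding G β D hD z = 0 := by
  intro z hz hzσ
  rw [winding, dif_pos hz]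
  set v : Fin (n+1) → cycleSpace G :=
    Fin.cons (α := fun _ => cycleSpace G) ⟨z, hz⟩ (fun k => ⟨fun e => D e k, hD k⟩) with hv
  set M : Matrix (Fin (n+1)) (Fin (n+1)) ℤ := Matrix.of fun i j => β.repr (v j) i with hM
  show M.det = 0
  -- cast to ℚ
  have hcast : ((M.det : ℤ) : ℚ) = (M.map (Int.cast : ℤ → ℚ)).det :=
    RingHom.map_det (Int.castRingHom ℚ) M
  suffices hQ : (M.map (Int.cast : ℤ → ℚ)).det = 0 by
    have h2 : ((M.det : ℤ) : ℚ) = 0 := hcast.trans hQ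
    exact_mod_cast h2
  -- the functional ψ on ℚ^(n+1)
  obtain ⟨z', hz', hz'σ⟩ := exists_cycle_through_s13 G σ hnb
  set r : Fin (n+1) → ℚ := fun i => (((β i : G.edgeSet → ℤ) σ : ℤ) : ℚ) with hr
  set ψ : (Fin (n+1) → ℚ) →ₗ[ℚ] ℚ :=
    ∑ i, r i • (LinearMap.proj i : (Fin (n+1) → ℚ) →ₗ[ℚ] ℚ) with hψ
  have hψapp : ∀ w : Fin (n+1) → ℚ, ψ w = ∑ i, r i * w i := by
    intro w; simp [hψ]
  -- ψ of the repr (cast) of any cycle vector equals its σ-coordinate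
  have key : ∀ w : cycleSpace G,
      ψ (fun i => ((β.repr w i : ℤ) : ℚ)) = (((w : G.edgeSet → ℤ) σ : ℤ) : ℚ) := by
    intro w
    rw [hψapp]
    have hterm : ∀ i ∈ Finset.univ, r i * ((β.repr w i : ℤ) : ℚ)
        = (((β.repr w i * (β i : G.edgeSet → ℤ) σ : ℤ)) : ℚ) := by
      intro i _; rw [hr]; push_cast; ring
    rw [Finset.sum_congr rfl hterm, ← Int.cast_sum, repr_eval G β w σ]
  -- columns of M.map cast lie in ker ψ
  have hcol : ∀ j, (fun i => (M.map (Int.cast : ℤ → ℚ)) i j) ∈ LinearMap.ker ψ := by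
    intro j
    rw [LinearMap.mem_ker]
    have : (fun i => (M.map (Int.cast : ℤ → ℚ)) i j) = fun i => ((β.repr (v j) i : ℤ) : ℚ) := rfl
    rw [this, key]
    have : ((v j : G.edgeSet → ℤ)) σ = 0 := by
      rcases Fin.eq_zero_or_eq_succ j with h0 | ⟨k, hk⟩
      · subst h0; simpa [hv] using hzσ
      · subst hk; simpa [hv] using hσ k
    rw [this]; norm_num
  -- ker ψ is a proper subspace
  have hker_ne : LinearMap.ker ψ ≠ ⊤ := by
    intro htop
    have : ψ (fun i => ((β.repr ⟨z', hz'⟩ i : ℤ) : ℚ)) = 0 := by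
      rw [← LinearMap.mem_ker, htop]; trivial
    rw [key ⟨z', hz'⟩] at this
    exact hz'σ (by exact_mod_cast this)
  have hdim : Module.finrank ℚ (LinearMap.ker ψ) < n + 1 := by
    have := Submodule.finrank_lt_finrank_of_lt (lt_top_iff_ne_top.mpr hker_ne)
    simpa using this
  -- hence columns are linearly dependent
  have hnli : ¬ LinearIndependent ℚ (fun j i => (M.map (Int.cast : ℤ → ℚ)) i j) := by
    intro hli
    have hli' : LinearIndependent ℚ
        (fun j => (⟨fun i => (M.map (Int.cast : ℤ → ℚ)) i j, hcol j⟩ : LinearMap.ker ψ)) := by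
      exact LinearIndependent.of_comp (LinearMap.ker ψ).subtype hli
    have := hli'.fintype_card_le_finrank
    simp at this
    omega
  rw [Fintype.not_linearIndependent_iff] at hnli
  obtain ⟨g, hg, i₀, hi₀⟩ := hnli
  rw [← Matrix.exists_mulVec_eq_zero_iff]
  refine ⟨g, fun h0 => hi₀ (congrFun h0 i₀), ?_⟩
  funext i
  have := congrFun hg i
  simpa [Matrix.mulVec, dotProduct, mul_comm] using this
end
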